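/- For bilinear forms h_1,…,h_p and k_1,…,k_p on an n-dimensional Euclidean space, the composition product of the exterior products satisfies (h_1 h_2 ⋯ h_p) ∘ (k_1 k_2 ⋯ k_p) = Σ_{σ ∈ S_p} (h_1 ∘ k_{σ(1)}) ⋯ (h_p ∘ k_{σ(p)}). -/

import Mathlib

/-
Double forms on the Euclidean space ℝⁿ, following Labbi's formalism.
A (p,q) double form is modelled as a real-valued function of a p-tuple and a
q-tuple of vectors (the relevant ones being those multilinear and alternating
in each block, i.e. bilinear forms on Λ^p V × Λ^q V).
-/

open scoped BigOperators RealInnerProductSpace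

noncomputable section

abbrev EucV (n : ℕ) := EuclideanSpace ℝ (Fin n)

/-- A (p,q) double form on ℝⁿ: a bilinear form on Λ^p V × Λ^q V, viewed as a
multilinear form skew-symmetric in the first p and in the last q arguments. -/
abbrev DF (n p q : ℕ) := (Fin p → EucV n) → (Fin q → EucV n) → ℝ

variable {n : ℕ}

/-- standard orthonormal basis of ℝⁿ -/
def bv (n : ℕ) (i : Fin n) : EucV n := EuclideanSpace.single i 1

/-- strictly increasing multi-indices of length p -/
def Incr (n p : ℕ) : Finset (Fin p → Fin n) :=
  Finset.univ.filter (fun f => ∀ a b : Fin p, a < b → f a < f b)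

/-- sign of a permutation, as a real number -/
def sgn {m : ℕ} (σ : Equiv.Perm (Fin m)) : ℝ := ((Equiv.Perm.sign σ : ℤ) : ℝ)

/-- exterior product of double forms:
(θ₁⊗θ₂)(θ₃⊗θ₄) = (θ₁∧θ₃)⊗(θ₂∧θ₄). -/
def extMul {p q r s : ℕ} (ω : DF n p q) (η : DF n r s) : DF n (p + r) (q + s) :=
  fun x y =>
    (p.factorial * r.factorial * q.factorial * s.factorial : ℝ)⁻¹ *
      ∑ σ : Equiv.Perm (Fin (p + r)), ∑ τ : Equiv.Perm (Fin (q + s)),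
        sgn σ * sgn τ *
          (ω (fun i => x (σ (Fin.castAdd r i))) (fun j => y (τ (Fin.castAdd s j))) *
            η (fun i => x (σ (Fin.natAdd p i))) (fun j => y (τ (Fin.natAdd q j))))

/-- composition (Greub) product of double forms: for ω₁ ∈ D^{p,q}, ω₂ ∈ D^{r,p},
(ω₁ ∘ ω₂)(u,v) = Σ_{i₁<…<i_p} ω₂(u, e_I) ω₁(e_I, v); it corresponds to the
composition of the associated operators on ΛV. -/
def compDF {p q r : ℕ} (ω₁ : DF n p q) (ω₂ : DF n r p) : DF n r q :=
  fun u v => ∑ f ∈ Incr n p, ω₂ u (fun i => bv n (f i)) * ω₁ (fun i => bv n (f i)) v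

/-- transpose of a double form -/
def transDF {p q : ℕ} (ω : DF n p q) : DF n q p := fun u v => ω v u

/-- re-indexing cast of a double form -/
def castDF {p q p' q' : ℕ} (hp : p = p') (hq : q = q') (ω : DF n p q) : DF n p' q' :=
  fun x y => ω (x ∘ Fin.cast hp) (y ∘ Fin.cast hq)

/-- Ricci contraction of double forms -/
def contractDF {p q : ℕ} (ω : DF n (p + 1) (q + 1)) : DF n p q :=
  fun x y => ∑ i : Fin n, ω (Fin.cons (bv n i) x) (Fin.cons (bv n i) y)

/-- iterated contraction c^k -/
def contractIterDF {p q : ℕ} : (k : ℕ) → DF n (p + k) (q + k) → DF n p q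
  | 0, ω => ω
  | k + 1, ω => contractIterDF k (contractDF ω)

/-- interior product i_ψ of double forms (the adjoint of left exterior
multiplication by ψ): for ψ ∈ D^{r,s} and ω ∈ D^{r+p,s+q},
(i_ψ ω)(x;y) = Σ_{I,J increasing} ψ(e_I;e_J) ω(e_I,x;e_J,y). -/
def interiorDF {r s p q : ℕ} (ψ : DF n r s) (ω : DF n (r + p) (s + q)) : DF n p q :=
  fun x y =>
    ∑ f ∈ Incr n r, ∑ g ∈ Incr n s,
      ψ (fun i => bv n (f i)) (fun j => bv n (g j)) *
        ω (Fin.append (fun i => bv n (f i)) x) (Fin.append (fun j => bv n (g j)) y)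

/-- inner product of (p,q) double forms, induced by the inner products of the
exterior powers -/
def innerDF {p q : ℕ} (ω η : DF n p q) : ℝ :=
  ∑ f ∈ Incr n p, ∑ g ∈ Incr n q,
    ω (fun i => bv n (f i)) (fun j => bv n (g j)) *
      η (fun i => bv n (f i)) (fun j => bv n (g j))

/-- the metric of ℝⁿ as a (1,1) double form -/
def gDF (n : ℕ) : DF n 1 1 := fun u v => (inner ℝ (u 0) (v 0) : ℝ)

/-- exterior powers of a (1,1) double form -/
def powDF (h : DF n 1 1) : (p : ℕ) → DF n p p
  | 0 => fun _ _ => 1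
  | p + 1 => extMul (powDF h p) h

/-- exterior product h₁h₂⋯h_p of a family of (1,1) double forms -/
def extProdDF : {p : ℕ} → (Fin p → DF n 1 1) → DF n p p
  | 0, _ => fun _ _ => 1
  | p + 1, h => extMul (extProdDF fun i => h i.castSucc) (h (Fin.last p))

/-- determinant (volume form) of an n-tuple of vectors of ℝⁿ -/
def volDF (n : ℕ) (v : Fin n → EucV n) : ℝ :=
  Matrix.det (Matrix.of fun i j => (inner ℝ (bv n i) (v j) : ℝ))

/-- double Hodge star operator on double forms:
*(θ₁⊗θ₂) = (*θ₁)⊗(*θ₂), given here by the classical formula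
(*α)(x) = Σ_{I increasing} α(e_I) vol(e_I, x) applied in each slot. -/
def starDF {p q : ℕ} (hp : p ≤ n) (hq : q ≤ n) (ω : DF n p q) : DF n (n - p) (n - q) :=
  fun x y =>
    ∑ f ∈ Incr n p, ∑ g ∈ Incr n q,
      ω (fun i => bv n (f i)) (fun j => bv n (g j)) *
        volDF n (Fin.append (fun i => bv n (f i)) x ∘ Fin.cast (Nat.add_sub_cancel' hp).symm) *
        volDF n (Fin.append (fun j => bv n (g j)) y ∘ Fin.cast (Nat.add_sub_cancel' hq).symm)

/-- the endomorphism h̄ associated to a bilinear form h: ⟪h̄ v, w⟫ = h(v,w) -/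
def hbar (h : DF n 1 1) (v : EucV n) : EucV n :=
  ∑ j : Fin n, h ![v] ![bv n j] • bv n j

/-- the adjoint endomorphism h̄*: ⟪v, h̄* w⟫ = h(v,w) -/
def hbarAdj (h : DF n 1 1) (v : EucV n) : EucV n :=
  ∑ i : Fin n, h ![bv n i] ![v] • bv n i

/-- the right extension ĥ_R = id ⊗ ĥ of (the exterior-algebra extension ĥ of) h̄,
acting on double forms via the metric identification with double vectors -/
def hhatR {p q : ℕ} (h : DF n 1 1) (ω : DF n p q) : DF n p q :=
  fun x y => ω x (fun j => hbarAdj h (y j))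

/-- determinant of (the endomorphism associated to) a bilinear form -/
def detDF (h : DF n 1 1) : ℝ :=
  Matrix.det (Matrix.of fun i j : Fin n => h ![bv n i] ![bv n j])

/-- omit one member of a family -/
def omit1 {α : Sort*} {p : ℕ} (h : Fin (p + 1) → α) (j : Fin (p + 1)) : Fin p → α :=
  fun i => h (j.succAbove i)

/-- omit two members of a family -/
def omit2 {α : Sort*} {p : ℕ} (h : Fin (p + 2) → α) (j k : Fin (p + 2)) (hjk : j < k) :
    Fin p → α :=
  omit1 (omit1 h k) ⟨j.1, by have h1 : j.1 < k.1 := hjk; have h2 : k.1 < p + 2 := k.isLt; omega⟩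

/-- the first Bianchi map 𝔖 : D^{p,q+1} → D^{p+1,q} -/
def bianchiDF {p q : ℕ} (ω : DF n p (q + 1)) : DF n (p + 1) q :=
  fun x y =>
    (p.factorial : ℝ)⁻¹ *
      ∑ σ : Equiv.Perm (Fin (p + 1)),
        sgn σ * ω (fun i => x (σ i.castSucc)) (Fin.cons (x (σ (Fin.last p))) y)

/-- the alternating operator Alt : D^{p,p} → Λ^{2p} -/
def altDF {p : ℕ} (ω : DF n p p) : (Fin (p + p) → EucV n) → ℝ :=
  fun v =>
    ((p + p).factorial : ℝ)⁻¹ *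
      ∑ σ : Equiv.Perm (Fin (p + p)),
        sgn σ * ω (fun i => v (σ (Fin.castAdd p i))) (fun i => v (σ (Fin.natAdd p i)))

/-- exterior powers of a (2,2) double form -/
def pow2DF (R : DF n 2 2) : (k : ℕ) → DF n (2 * k) (2 * k)
  | 0 => fun _ _ => 1
  | k + 1 => extMul (pow2DF R k) R

/-- the diagonal simple double form (v₁∧…∧v_p) ⊗ (v₁∧…∧v_p), as a bilinear form -/
def simpleDiag {p : ℕ} (v : Fin p → EucV n) : DF n p p :=
  fun x y =>
    Matrix.det (Matrix.of fun i j => (inner ℝ (v i) (x j) : ℝ)) *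
      Matrix.det (Matrix.of fun i j => (inner ℝ (v i) (y j) : ℝ))


section GVaux

variable {n : ℕ}

/-- permutation-sum formula for the exterior product of (1,1) double forms -/
def Pform {p : ℕ} (h : Fin p → DF n 1 1) : DF n p p :=
  fun x y => ∑ σ : Equiv.Perm (Fin p), ∑ τ : Equiv.Perm (Fin p),
    sgn σ * sgn τ * ∏ i, h i ![x (σ i)] ![y (τ i)]

lemma sgn_mul {m : ℕ} (σ τ : Equiv.Perm (Fin m)) : sgn (σ * τ) = sgn σ * sgn τ := by
  simp only [sgn]; rw [map_mul, Units.val_mul, Int.cast_mul]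

lemma sgn_inv {m : ℕ} (σ : Equiv.Perm (Fin m)) : sgn σ⁻¹ = sgn σ := by
  simp only [sgn, Equiv.Perm.sign_inv]

lemma sgn_sq {m : ℕ} (σ : Equiv.Perm (Fin m)) : sgn σ * sgn σ = 1 := by
  simp only [sgn]; rw [← Int.cast_mul, ← Units.val_mul, Int.units_mul_self]; simp

/-- extend a permutation of `Fin p` to `Fin (p+1)` fixing the last element -/
def extPerm {p : ℕ} (ρ : Equiv.Perm (Fin p)) : Equiv.Perm (Fin (p + 1)) :=
  finSuccEquivLast.symm.permCongr ρ.optionCongr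

lemma extPerm_castSucc {p : ℕ} (ρ : Equiv.Perm (Fin p)) (i : Fin p) :
    extPerm ρ i.castSucc = (ρ i).castSucc := by
  simp [extPerm, Equiv.permCongr_apply]

lemma extPerm_last {p : ℕ} (ρ : Equiv.Perm (Fin p)) :
    extPerm ρ (Fin.last p) = Fin.last p := by
  simp [extPerm, Equiv.permCongr_apply]

lemma sgn_extPerm {p : ℕ} (ρ : Equiv.Perm (Fin p)) : sgn (extPerm ρ) = sgn ρ := by
  simp only [sgn, extPerm]
  rw [Equiv.Perm.sign_permCongr, Equiv.optionCongr_sign]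

lemma perm_absorb {p : ℕ} (F : Equiv.Perm (Fin (p + 1)) → ℝ) :
    ∑ ρ : Equiv.Perm (Fin p), ∑ σ : Equiv.Perm (Fin (p + 1)),
      sgn σ * sgn ρ * F (σ * extPerm ρ) = (p.factorial : ℝ) * ∑ σ, sgn σ * F σ := by
  have h1 : ∀ ρ : Equiv.Perm (Fin p),
      (∑ σ : Equiv.Perm (Fin (p + 1)), sgn σ * sgn ρ * F (σ * extPerm ρ))
        = ∑ σ, sgn σ * F σ :=
    fun ρ => Fintype.sum_equiv (Equiv.mulRight (extPerm ρ))
      (fun σ => sgn σ * sgn ρ * F (σ * extPerm ρ))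
      (fun σ' => sgn σ' * F σ')
      (fun σ => by simp only [Equiv.coe_mulRight]; rw [sgn_mul, sgn_extPerm])
  rw [Finset.sum_congr rfl fun ρ _ => h1 ρ, Finset.sum_const, Finset.card_univ,
    Fintype.card_perm, Fintype.card_fin, nsmul_eq_mul]

lemma double_absorb {p : ℕ} (Φ : Equiv.Perm (Fin (p + 1)) → Equiv.Perm (Fin (p + 1)) → ℝ) :
    ∑ σ : Equiv.Perm (Fin (p + 1)), ∑ τ : Equiv.Perm (Fin (p + 1)),
      ∑ ρ : Equiv.Perm (Fin p), ∑ ρ' : Equiv.Perm (Fin p),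
        sgn σ * sgn ρ * (sgn τ * sgn ρ' * Φ (σ * extPerm ρ) (τ * extPerm ρ'))
      = (p.factorial : ℝ) * ((p.factorial : ℝ) *
          ∑ σ, ∑ τ, sgn σ * sgn τ * Φ σ τ) := by
  calc ∑ σ : Equiv.Perm (Fin (p + 1)), ∑ τ : Equiv.Perm (Fin (p + 1)),
      ∑ ρ : Equiv.Perm (Fin p), ∑ ρ' : Equiv.Perm (Fin p),
        sgn σ * sgn ρ * (sgn τ * sgn ρ' * Φ (σ * extPerm ρ) (τ * extPerm ρ'))
      = ∑ σ : Equiv.Perm (Fin (p + 1)), ∑ ρ : Equiv.Perm (Fin p),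
          ∑ τ : Equiv.Perm (Fin (p + 1)), ∑ ρ' : Equiv.Perm (Fin p),
            sgn σ * sgn ρ * (sgn τ * sgn ρ' * Φ (σ * extPerm ρ) (τ * extPerm ρ')) := by
        exact Finset.sum_congr rfl fun σ _ => Finset.sum_comm
    _ = ∑ ρ : Equiv.Perm (Fin p), ∑ σ : Equiv.Perm (Fin (p + 1)),
          ∑ ρ' : Equiv.Perm (Fin p), ∑ τ : Equiv.Perm (Fin (p + 1)),
            sgn σ * sgn ρ * (sgn τ * sgn ρ' * Φ (σ * extPerm ρ) (τ * extPerm ρ')) := by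
        rw [Finset.sum_comm]
        exact Finset.sum_congr rfl fun ρ _ => Finset.sum_congr rfl fun σ _ => Finset.sum_comm
    _ = ∑ ρ : Equiv.Perm (Fin p), ∑ σ : Equiv.Perm (Fin (p + 1)),
          sgn σ * sgn ρ * (∑ ρ' : Equiv.Perm (Fin p), ∑ τ : Equiv.Perm (Fin (p + 1)),
            sgn τ * sgn ρ' * Φ (σ * extPerm ρ) (τ * extPerm ρ')) := by
        refine Finset.sum_congr rfl fun ρ _ => Finset.sum_congr rfl fun σ _ => ?_
        rw [Finset.mul_sum]
        exact Finset.sum_congr rfl fun ρ' _ => by rw [Finset.mul_sum]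
    _ = ∑ ρ : Equiv.Perm (Fin p), ∑ σ : Equiv.Perm (Fin (p + 1)),
          sgn σ * sgn ρ * ((p.factorial : ℝ) * ∑ τ, sgn τ * Φ (σ * extPerm ρ) τ) := by
        refine Finset.sum_congr rfl fun ρ _ => Finset.sum_congr rfl fun σ _ => ?_
        rw [perm_absorb (fun τ => Φ (σ * extPerm ρ) τ)]
    _ = (p.factorial : ℝ) * ∑ ρ : Equiv.Perm (Fin p), ∑ σ : Equiv.Perm (Fin (p + 1)),
          sgn σ * sgn ρ * (∑ τ, sgn τ * Φ (σ * extPerm ρ) τ) := by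
        rw [Finset.mul_sum]
        exact Finset.sum_congr rfl fun ρ _ => by
          rw [Finset.mul_sum]
          exact Finset.sum_congr rfl fun σ _ => by ring
    _ = (p.factorial : ℝ) * ((p.factorial : ℝ) * ∑ σ, sgn σ * ∑ τ, sgn τ * Φ σ τ) := by
        congr 1
        exact perm_absorb (fun σ'' => ∑ τ, sgn τ * Φ σ'' τ)
    _ = (p.factorial : ℝ) * ((p.factorial : ℝ) * ∑ σ, ∑ τ, sgn σ * sgn τ * Φ σ τ) := by
        congr 1; congr 1
        exact Finset.sum_congr rfl fun σ _ => by
          rw [Finset.mul_sum]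
          exact Finset.sum_congr rfl fun τ _ => by ring

end GVaux
section GVaux2
variable {n : ℕ}

lemma fin1_fun_eq {α : Type*} (w : Fin 1 → α) : w = ![w 0] := by
  funext j
  rw [Subsingleton.elim j 0]
  rfl

lemma natAdd_fin1 {p : ℕ} (i : Fin 1) : Fin.natAdd p i = Fin.last p := by
  apply Fin.ext; simp [Subsingleton.elim i 0]

lemma extProd_eq {p : ℕ} (h : Fin p → DF n 1 1) : extProdDF h = Pform h := by
  induction p with
  | zero =>
      funext x y
      show (1 : ℝ) = _
      rw [Pform]
      have h1 : ∀ σ τ : Equiv.Perm (Fin 0),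
          sgn σ * sgn τ * ∏ i : Fin 0, h i ![x (σ i)] ![y (τ i)] = 1 := by
        intro σ τ
        rw [Subsingleton.elim σ 1, Subsingleton.elim τ 1]
        simp [sgn]
      rw [Finset.sum_congr rfl fun σ _ => Finset.sum_congr rfl fun τ _ => h1 σ τ]
      simp [Fintype.card_perm]
  | succ p ih =>
      funext x y
      show extMul (extProdDF fun i => h i.castSucc) (h (Fin.last p)) x y = Pform h x y
      rw [ih]
      rw [extMul]
      have hΦ : ∀ (σ τ : Equiv.Perm (Fin (p + 1))) (ρ ρ' : Equiv.Perm (Fin p)),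
          (∏ i : Fin p, h i.castSucc ![x (σ (Fin.castAdd 1 (ρ i)))] ![y (τ (Fin.castAdd 1 (ρ' i)))])
              * (h (Fin.last p) (fun i => x (σ (Fin.natAdd p i))) (fun j => y (τ (Fin.natAdd p j))))
            = ∏ i : Fin (p + 1), h i ![x ((σ * extPerm ρ) i)] ![y ((τ * extPerm ρ') i)] := by
        intro σ τ ρ ρ'
        rw [Fin.prod_univ_castSucc]
        congr 1
        · refine Finset.prod_congr rfl fun i _ => ?_
          rw [Equiv.Perm.mul_apply, Equiv.Perm.mul_apply, extPerm_castSucc, extPerm_castSucc]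
          rfl
        · rw [Equiv.Perm.mul_apply, Equiv.Perm.mul_apply, extPerm_last, extPerm_last]
          congr 1
          · rw [fin1_fun_eq (fun i => x (σ (Fin.natAdd p i)))]
            rw [natAdd_fin1]
          · rw [fin1_fun_eq (fun j => y (τ (Fin.natAdd p j)))]
            rw [natAdd_fin1]
      have key : (∑ σ : Equiv.Perm (Fin (p + 1)), ∑ τ : Equiv.Perm (Fin (p + 1)),
            sgn σ * sgn τ *
              (Pform (fun i => h i.castSucc) (fun i => x (σ (Fin.castAdd 1 i)))
                  (fun j => y (τ (Fin.castAdd 1 j))) *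
                h (Fin.last p) (fun i => x (σ (Fin.natAdd p i))) (fun j => y (τ (Fin.natAdd p j)))))
          = (p.factorial : ℝ) * ((p.factorial : ℝ) * Pform h x y) := by
        conv_rhs => rw [Pform]
        rw [← double_absorb (fun σ τ => ∏ i : Fin (p + 1), h i ![x (σ i)] ![y (τ i)])]
        refine Finset.sum_congr rfl fun σ _ => Finset.sum_congr rfl fun τ _ => ?_
        rw [Pform]
        simp only [Finset.sum_mul, Finset.mul_sum]
        refine Finset.sum_congr rfl fun ρ _ => Finset.sum_congr rfl fun ρ' _ => ?_
        rw [← hΦ σ τ ρ ρ']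
        ring
      rw [key]
      have hf : ((p.factorial : ℝ) : ℝ) ≠ 0 := Nat.cast_ne_zero.mpr p.factorial_ne_zero
      simp only [Nat.factorial_one, Nat.cast_mul, Nat.cast_one, mul_one]
      field_simp

end GVaux2
section GVaux3
variable {n p : ℕ}

lemma Pform_comp_right (h : Fin p → DF n 1 1) (x y : Fin p → EucV n) (π : Equiv.Perm (Fin p)) :
    Pform h x (y ∘ π) = sgn π * Pform h x y := by
  rw [Pform, Pform, Finset.mul_sum]
  refine Finset.sum_congr rfl fun σ _ => ?_
  rw [Finset.mul_sum]
  refine Fintype.sum_equiv (Equiv.mulLeft π) _ _ fun τ => ?_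
  simp only [Equiv.coe_mulLeft, Equiv.Perm.mul_apply, Function.comp_apply]
  rw [sgn_mul]
  have hsq := sgn_sq π
  linear_combination (-(sgn σ * sgn τ * ∏ i, h i ![x (σ i)] ![y (π (τ i))])) * hsq

lemma Pform_comp_left (h : Fin p → DF n 1 1) (x y : Fin p → EucV n) (π : Equiv.Perm (Fin p)) :
    Pform h (x ∘ π) y = sgn π * Pform h x y := by
  rw [Pform, Pform, Finset.mul_sum]
  refine Fintype.sum_equiv (Equiv.mulLeft π) _ _ fun σ => ?_
  simp only [Equiv.coe_mulLeft]
  rw [Finset.mul_sum]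
  refine Finset.sum_congr rfl fun τ _ => ?_
  simp only [Equiv.Perm.mul_apply, Function.comp_apply]
  rw [sgn_mul]
  have hsq := sgn_sq π
  linear_combination (-(sgn σ * sgn τ * ∏ i, h i ![x (π (σ i))] ![y (τ i)])) * hsq

lemma Pform_zero_right (h : Fin p → DF n 1 1) (x y : Fin p → EucV n) {i j : Fin p}
    (hij : i ≠ j) (hy : y i = y j) : Pform h x y = 0 := by
  have h1 : y ∘ (Equiv.swap i j : Equiv.Perm (Fin p)) = y := by
    funext a
    simp only [Function.comp_apply]
    rcases eq_or_ne a i with rfl | hai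
    · rw [Equiv.swap_apply_left]; exact hy.symm
    rcases eq_or_ne a j with rfl | haj
    · rw [Equiv.swap_apply_right]; exact hy
    · rw [Equiv.swap_apply_of_ne_of_ne hai haj]
  have h2 := Pform_comp_right h x y (Equiv.swap i j)
  rw [h1] at h2
  have h3 : sgn (Equiv.swap i j) = -1 := by
    simp [sgn, Equiv.Perm.sign_swap hij]
  rw [h3] at h2
  linarith

lemma Pform_zero_left (h : Fin p → DF n 1 1) (x y : Fin p → EucV n) {i j : Fin p}
    (hij : i ≠ j) (hx : x i = x j) : Pform h x y = 0 := by
  have h1 : x ∘ (Equiv.swap i j : Equiv.Perm (Fin p)) = x := by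
    funext a
    simp only [Function.comp_apply]
    rcases eq_or_ne a i with rfl | hai
    · rw [Equiv.swap_apply_left]; exact hx.symm
    rcases eq_or_ne a j with rfl | haj
    · rw [Equiv.swap_apply_right]; exact hx
    · rw [Equiv.swap_apply_of_ne_of_ne hai haj]
  have h2 := Pform_comp_left h x y (Equiv.swap i j)
  rw [h1] at h2
  have h3 : sgn (Equiv.swap i j) = -1 := by
    simp [sgn, Equiv.Perm.sign_swap hij]
  rw [h3] at h2
  linarith

lemma incr_mem_iff {g : Fin p → Fin n} : g ∈ Incr n p ↔ StrictMono g := by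
  simp only [Incr, Finset.mem_filter, Finset.mem_univ, true_and]
  exact ⟨fun h a b hab => h a b hab, fun h a b hab => h hab⟩

lemma imcard (f : Fin p → Fin n) (hf : Function.Injective f) :
    (Finset.image f Finset.univ).card = p := by
  rw [Finset.card_image_of_injective _ hf, Finset.card_univ, Fintype.card_fin]

def monoOf (f : Fin p → Fin n) (hf : Function.Injective f) : Fin p → Fin n :=
  ⇑((Finset.image f Finset.univ).orderEmbOfFin (imcard f hf))

lemma monoOf_strictMono (f : Fin p → Fin n) (hf : Function.Injective f) :
    StrictMono (monoOf f hf) := (Finset.orderEmbOfFin _ _).strictMono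

def permOf (f : Fin p → Fin n) (hf : Function.Injective f) : Equiv.Perm (Fin p) :=
  Equiv.ofBijective
    (fun i => ((Finset.image f Finset.univ).orderIsoOfFin (imcard f hf)).symm
      ⟨f i, Finset.mem_image_of_mem f (Finset.mem_univ i)⟩)
    (Finite.injective_iff_bijective.mp (fun a b hab => hf (by
      have h2 := congrArg ((Finset.image f Finset.univ).orderIsoOfFin (imcard f hf)) hab
      simp only [OrderIso.apply_symm_apply] at h2
      exact congrArg Subtype.val h2)))

lemma monoOf_comp_permOf (f : Fin p → Fin n) (hf : Function.Injective f) :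
    monoOf f hf ∘ permOf f hf = f := by
  funext i
  simp only [Function.comp_apply, permOf, Equiv.ofBijective_apply, monoOf]
  rw [← Finset.coe_orderIsoOfFin_apply]
  rw [OrderIso.apply_symm_apply]

lemma monoOf_uniq {g : Fin p → Fin n} (hg : StrictMono g) (π : Equiv.Perm (Fin p))
    (hf : Function.Injective (g ∘ π)) : monoOf (g ∘ π) hf = g := by
  refine (Finset.orderEmbOfFin_unique (imcard _ hf) (fun x => ?_) hg).symm
  refine Finset.mem_image.mpr ⟨π.symm x, Finset.mem_univ _, ?_⟩
  simp only [Function.comp_apply, Equiv.apply_symm_apply]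

lemma permOf_uniq {g : Fin p → Fin n} (hg : StrictMono g) (π : Equiv.Perm (Fin p))
    (hf : Function.Injective (g ∘ π)) : permOf (g ∘ π) hf = π := by
  have h1 := monoOf_comp_permOf (g ∘ π) hf
  rw [monoOf_uniq hg π hf] at h1
  exact Equiv.ext fun i => hg.injective (congrFun h1 i)

lemma sum_incr (A : (Fin p → Fin n) → ℝ)
    (h0 : ∀ f : Fin p → Fin n, ¬Function.Injective f → A f = 0)
    (h1 : ∀ (f : Fin p → Fin n) (π : Equiv.Perm (Fin p)), A (f ∘ π) = A f) :
    ∑ f : Fin p → Fin n, A f = (p.factorial : ℝ) * ∑ f ∈ Incr n p, A f := by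
  classical
  rw [← Finset.sum_filter_add_sum_filter_not Finset.univ (fun f => Function.Injective f) A]
  rw [Finset.sum_eq_zero (fun f hf => h0 f (Finset.mem_filter.mp hf).2), add_zero]
  rw [Finset.mul_sum]
  rw [Finset.sum_congr rfl (fun g hg =>
    show (p.factorial : ℝ) * A g = ∑ π : Equiv.Perm (Fin p), A (g ∘ π) from by
      rw [Finset.sum_congr rfl fun π _ => h1 g π, Finset.sum_const, Finset.card_univ,
        Fintype.card_perm, Fintype.card_fin, nsmul_eq_mul])]
  rw [← Finset.sum_product']
  refine Finset.sum_bij'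
    (fun f hf => (monoOf f (Finset.mem_filter.mp hf).2, permOf f (Finset.mem_filter.mp hf).2))
    (fun q _ => q.1 ∘ q.2) ?_ ?_ ?_ ?_ ?_
  · intro f hf
    exact Finset.mem_product.mpr
      ⟨incr_mem_iff.mpr (monoOf_strictMono f (Finset.mem_filter.mp hf).2), Finset.mem_univ _⟩
  · intro q hq
    refine Finset.mem_filter.mpr ⟨Finset.mem_univ _, ?_⟩
    exact (incr_mem_iff.mp (Finset.mem_product.mp hq).1).injective.comp q.2.injective
  · intro f hf
    exact monoOf_comp_permOf f (Finset.mem_filter.mp hf).2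
  · intro q hq
    have hg := incr_mem_iff.mp (Finset.mem_product.mp hq).1
    have hinj : Function.Injective (q.1 ∘ q.2) := hg.injective.comp q.2.injective
    exact Prod.ext (monoOf_uniq hg q.2 hinj) (permOf_uniq hg q.2 hinj)
  · intro f hf
    exact (congrArg A (monoOf_comp_permOf f (Finset.mem_filter.mp hf).2)).symm

end GVaux3
section GVaux4
variable {n p : ℕ}

lemma Incr_one : Incr n 1 = Finset.univ := by
  ext f
  simp only [Incr, Finset.mem_filter, Finset.mem_univ, true_and, iff_true]
  intro a b hab
  rw [Subsingleton.elim a b] at hab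
  exact absurd hab (lt_irrefl b)

lemma compDF_one (ω₁ ω₂ : DF n 1 1) (w z : Fin 1 → EucV n) :
    compDF ω₁ ω₂ w z = ∑ m : Fin n, ω₂ w ![bv n m] * ω₁ ![bv n m] z := by
  rw [compDF, Incr_one]
  refine (Fintype.sum_equiv (Equiv.funUnique (Fin 1) (Fin n)).symm
    (fun m => ω₂ w ![bv n m] * ω₁ ![bv n m] z) _ fun m => ?_).symm
  have e1 : (fun i : Fin 1 => bv n (((Equiv.funUnique (Fin 1) (Fin n)).symm m) i))
      = ![bv n m] := by
    funext j
    rw [Subsingleton.elim j 0]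
    rfl
  rw [e1]

lemma step (D : Fin p → Fin p → Fin p → Fin p → ℝ) :
    ∑ σ : Equiv.Perm (Fin p), ∑ σ' : Equiv.Perm (Fin p),
      ∑ τ : Equiv.Perm (Fin p), ∑ τ' : Equiv.Perm (Fin p),
        sgn σ * sgn τ * sgn σ' * sgn τ' *
          ∏ j, D (σ'⁻¹ j) (τ⁻¹ j) (σ (τ⁻¹ j)) (τ' (σ'⁻¹ j))
      = (p.factorial : ℝ) * ∑ π : Equiv.Perm (Fin p), ∑ α : Equiv.Perm (Fin p),
          ∑ β : Equiv.Perm (Fin p), sgn α * sgn β * ∏ i, D i (π i) (α i) (β i) := by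
  calc ∑ σ : Equiv.Perm (Fin p), ∑ σ' : Equiv.Perm (Fin p),
      ∑ τ : Equiv.Perm (Fin p), ∑ τ' : Equiv.Perm (Fin p),
        sgn σ * sgn τ * sgn σ' * sgn τ' *
          ∏ j, D (σ'⁻¹ j) (τ⁻¹ j) (σ (τ⁻¹ j)) (τ' (σ'⁻¹ j))
      = ∑ σ' : Equiv.Perm (Fin p), ∑ σ : Equiv.Perm (Fin p),
          ∑ τ : Equiv.Perm (Fin p), ∑ τ' : Equiv.Perm (Fin p),
            sgn σ * sgn τ * sgn σ' * sgn τ' *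
              ∏ j, D (σ'⁻¹ j) (τ⁻¹ j) (σ (τ⁻¹ j)) (τ' (σ'⁻¹ j)) := Finset.sum_comm
    _ = ∑ σ' : Equiv.Perm (Fin p), ∑ τ : Equiv.Perm (Fin p),
          ∑ σ : Equiv.Perm (Fin p), ∑ τ' : Equiv.Perm (Fin p),
            sgn σ * sgn τ * sgn σ' * sgn τ' *
              ∏ j, D (σ'⁻¹ j) (τ⁻¹ j) (σ (τ⁻¹ j)) (τ' (σ'⁻¹ j)) :=
        Finset.sum_congr rfl fun σ' _ => Finset.sum_comm
    _ = ∑ σ' : Equiv.Perm (Fin p), ∑ τ : Equiv.Perm (Fin p),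
          ∑ τ' : Equiv.Perm (Fin p), ∑ σ : Equiv.Perm (Fin p),
            sgn σ * sgn τ * sgn σ' * sgn τ' *
              ∏ j, D (σ'⁻¹ j) (τ⁻¹ j) (σ (τ⁻¹ j)) (τ' (σ'⁻¹ j)) :=
        Finset.sum_congr rfl fun σ' _ => Finset.sum_congr rfl fun τ _ => Finset.sum_comm
    _ = ∑ σ' : Equiv.Perm (Fin p), ∑ τ' : Equiv.Perm (Fin p),
          ∑ τ : Equiv.Perm (Fin p), ∑ σ : Equiv.Perm (Fin p),
            sgn σ * sgn τ * sgn σ' * sgn τ' *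
              ∏ j, D (σ'⁻¹ j) (τ⁻¹ j) (σ (τ⁻¹ j)) (τ' (σ'⁻¹ j)) :=
        Finset.sum_congr rfl fun σ' _ => Finset.sum_comm
    _ = ∑ σ' : Equiv.Perm (Fin p), ∑ τ' : Equiv.Perm (Fin p),
          ∑ π : Equiv.Perm (Fin p), ∑ α : Equiv.Perm (Fin p),
            sgn α * sgn τ' * ∏ i, D i (π i) (α i) (τ' i) := by
        refine Finset.sum_congr rfl fun σ' _ => Finset.sum_congr rfl fun τ' _ => ?_
        refine (Fintype.sum_equiv
          ((Equiv.inv (Equiv.Perm (Fin p))).trans (Equiv.mulLeft σ'))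
          _ _ fun π => ?_).symm
        refine Fintype.sum_equiv (Equiv.mulRight π⁻¹) _ _ fun α => ?_
        simp only [Equiv.coe_mulRight, Equiv.trans_apply, Equiv.inv_apply, Equiv.coe_mulLeft,
          mul_inv_rev, inv_inv, Equiv.Perm.mul_apply, (show ∀ (f : Equiv.Perm (Fin p)) x, f⁻¹ (f x) = x from fun f x => f.symm_apply_apply x)]
        rw [show (∏ j, D (σ'⁻¹ j) (π (σ'⁻¹ j)) (α (σ'⁻¹ j)) (τ' (σ'⁻¹ j)))
            = ∏ i, D i (π i) (α i) (τ' i) from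
          Equiv.prod_comp σ'⁻¹ (fun i => D i (π i) (α i) (τ' i))]
        rw [sgn_mul, sgn_mul, sgn_inv]
        have hs1 := sgn_sq π
        have hs2 := sgn_sq σ'
        linear_combination
          (-(sgn α * sgn τ' * (∏ i, D i (π i) (α i) (τ' i)) * (sgn σ' * sgn σ'))) * hs1 +
          (-(sgn α * sgn τ' * ∏ i, D i (π i) (α i) (τ' i))) * hs2
    _ = (p.factorial : ℝ) * ∑ τ' : Equiv.Perm (Fin p),
          ∑ π : Equiv.Perm (Fin p), ∑ α : Equiv.Perm (Fin p),
            sgn α * sgn τ' * ∏ i, D i (π i) (α i) (τ' i) := by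
        rw [Finset.sum_const, Finset.card_univ, Fintype.card_perm, Fintype.card_fin,
          nsmul_eq_mul]
    _ = (p.factorial : ℝ) * ∑ π : Equiv.Perm (Fin p), ∑ α : Equiv.Perm (Fin p),
          ∑ β : Equiv.Perm (Fin p), sgn α * sgn β * ∏ i, D i (π i) (α i) (β i) := by
        congr 1
        rw [Finset.sum_comm]
        exact Finset.sum_congr rfl fun π _ => Finset.sum_comm

lemma sum_swap5 (G : (Fin p → Fin n) → Equiv.Perm (Fin p) → Equiv.Perm (Fin p) →
    Equiv.Perm (Fin p) → Equiv.Perm (Fin p) → ℝ) :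
    ∑ f : Fin p → Fin n, ∑ σ : Equiv.Perm (Fin p), ∑ σ' : Equiv.Perm (Fin p),
      ∑ τ : Equiv.Perm (Fin p), ∑ τ' : Equiv.Perm (Fin p), G f σ σ' τ τ'
    = ∑ σ : Equiv.Perm (Fin p), ∑ σ' : Equiv.Perm (Fin p), ∑ τ : Equiv.Perm (Fin p),
        ∑ τ' : Equiv.Perm (Fin p), ∑ f : Fin p → Fin n, G f σ σ' τ τ' := by
  rw [Finset.sum_comm]
  refine Finset.sum_congr rfl fun σ _ => ?_
  rw [Finset.sum_comm]
  refine Finset.sum_congr rfl fun σ' _ => ?_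
  rw [Finset.sum_comm]
  refine Finset.sum_congr rfl fun τ _ => ?_
  rw [Finset.sum_comm]

end GVaux4
/-- Greub–Vanstone basic identity:
(h₁h₂⋯h_p) ∘ (k₁k₂⋯k_p) = Σ_{σ∈S_p} (h₁∘k_{σ(1)})⋯(h_p∘k_{σ(p)}). -/
theorem stmt1 (n p : ℕ) (h k : Fin p → DF n 1 1) :
    compDF (extProdDF h) (extProdDF k) =
      ∑ σ : Equiv.Perm (Fin p), extProdDF (fun i => compDF (h i) (k (σ i))) := by
  funext u v
  simp only [extProd_eq]
  rw [compDF]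
  simp only [Finset.sum_apply]
  have h0 : ∀ f : Fin p → Fin n, ¬Function.Injective f →
      Pform k u (fun i => bv n (f i)) * Pform h (fun i => bv n (f i)) v = 0 := by
    intro f hf
    obtain ⟨i, j, hfij, hij⟩ := Function.not_injective_iff.mp hf
    rw [Pform_zero_right k u (fun i => bv n (f i)) hij (show bv n (f i) = bv n (f j) by rw [hfij]), zero_mul]
  have h1 : ∀ (f : Fin p → Fin n) (π : Equiv.Perm (Fin p)),
      Pform k u (fun i => bv n ((f ∘ π) i)) * Pform h (fun i => bv n ((f ∘ π) i)) v =
        Pform k u (fun i => bv n (f i)) * Pform h (fun i => bv n (f i)) v := by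
    intro f π
    have e1 : (fun i => bv n ((f ∘ π) i)) = (fun i => bv n (f i)) ∘ π := rfl
    rw [e1, Pform_comp_right, Pform_comp_left]
    have hsq := sgn_sq π
    linear_combination
      (Pform k u (fun i => bv n (f i)) * Pform h (fun i => bv n (f i)) v) * hsq
  have hsum := sum_incr
    (fun f => Pform k u (fun i => bv n (f i)) * Pform h (fun i => bv n (f i)) v) h0 h1
  have hfac : ((p.factorial : ℕ) : ℝ) ≠ 0 := Nat.cast_ne_zero.mpr p.factorial_ne_zero
  refine mul_left_cancel₀ hfac ?_
  rw [← hsum]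
  have hexp : ∀ f : Fin p → Fin n,
      Pform k u (fun i => bv n (f i)) * Pform h (fun i => bv n (f i)) v
        = ∑ σ : Equiv.Perm (Fin p), ∑ σ' : Equiv.Perm (Fin p),
            ∑ τ : Equiv.Perm (Fin p), ∑ τ' : Equiv.Perm (Fin p),
              sgn σ * sgn τ * sgn σ' * sgn τ' *
                ((∏ i, k i ![u (σ i)] ![bv n (f (τ i))]) *
                  (∏ i, h i ![bv n (f (σ' i))] ![v (τ' i)])) := by
    intro f
    rw [Pform, Pform, Finset.sum_mul_sum]
    refine Finset.sum_congr rfl fun σ _ => Finset.sum_congr rfl fun σ' _ => ?_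
    rw [Finset.sum_mul_sum]
    refine Finset.sum_congr rfl fun τ _ => Finset.sum_congr rfl fun τ' _ => ?_
    ring
  rw [Finset.sum_congr rfl fun f _ => hexp f]
  rw [sum_swap5]
  have hinner : ∀ σ σ' τ τ' : Equiv.Perm (Fin p),
      (∑ f : Fin p → Fin n, sgn σ * sgn τ * sgn σ' * sgn τ' *
        ((∏ i, k i ![u (σ i)] ![bv n (f (τ i))]) *
          (∏ i, h i ![bv n (f (σ' i))] ![v (τ' i)])))
      = sgn σ * sgn τ * sgn σ' * sgn τ' *
          ∏ j, compDF (h (σ'⁻¹ j)) (k (τ⁻¹ j)) ![u (σ (τ⁻¹ j))] ![v (τ' (σ'⁻¹ j))] := by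
    intro σ σ' τ τ'
    rw [← Finset.mul_sum]
    congr 1
    calc (∑ f : Fin p → Fin n,
          (∏ i, k i ![u (σ i)] ![bv n (f (τ i))]) *
            (∏ i, h i ![bv n (f (σ' i))] ![v (τ' i)]))
        = ∑ f : Fin p → Fin n, ∏ j,
            (k (τ⁻¹ j) ![u (σ (τ⁻¹ j))] ![bv n (f j)] *
              h (σ'⁻¹ j) ![bv n (f j)] ![v (τ' (σ'⁻¹ j))]) := by
          refine Finset.sum_congr rfl fun f _ => ?_
          rw [Finset.prod_mul_distrib]
          congr 1
          · refine Fintype.prod_equiv τ _ _ fun i => ?_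
            simp only [(show ∀ (f : Equiv.Perm (Fin p)) x, f⁻¹ (f x) = x from fun f x => f.symm_apply_apply x)]
          · refine Fintype.prod_equiv σ' _ _ fun i => ?_
            simp only [(show ∀ (f : Equiv.Perm (Fin p)) x, f⁻¹ (f x) = x from fun f x => f.symm_apply_apply x)]
      _ = ∏ j, ∑ m : Fin n,
            (k (τ⁻¹ j) ![u (σ (τ⁻¹ j))] ![bv n m] *
              h (σ'⁻¹ j) ![bv n m] ![v (τ' (σ'⁻¹ j))]) := by
          symm
          rw [Finset.prod_univ_sum]
          rw [Fintype.piFinset_univ]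
      _ = ∏ j, compDF (h (σ'⁻¹ j)) (k (τ⁻¹ j)) ![u (σ (τ⁻¹ j))] ![v (τ' (σ'⁻¹ j))] :=
          Finset.prod_congr rfl fun j _ => (compDF_one _ _ _ _).symm
  rw [Finset.sum_congr rfl fun σ _ => Finset.sum_congr rfl fun σ' _ =>
    Finset.sum_congr rfl fun τ _ => Finset.sum_congr rfl fun τ' _ => hinner σ σ' τ τ']
  rw [step (fun a b c d => compDF (h a) (k b) ![u c] ![v d])]
  simp only [Pform]
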